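/- Let N ≥ 1, let f : ℝ^N → ℝ be continuously differentiable with gradient K(x) := ∇f(x), and let r : ℝ → ℝ^N be differentiable with r(t) ≠ 0 for all t ≥ 0 and satisfying, for all t ≥ 0, r'(t) = λ(t) • r(t) − K(r(t)) with λ(t) := ⟪r(t), K(r(t))⟫ / ‖r(t)‖². Suppose r(t) converges as t → +∞ to a point r∞ with r∞ ≠ 0. Then K(r∞) = λ∞ • r∞, where λ∞ := ⟪r∞, K(r∞)⟫ / ‖r∞‖². -/

import Mathlib

open scoped RealInnerProductSpace
open Filter

lemma deriv_limit_zero {E : Type*} [NormedAddCommGroup E] [NormedSpace ℝ E]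
    (r : ℝ → E) (g : ℝ → E) (L : E) (a : E)
    (hd : ∀ t : ℝ, 0 ≤ t → HasDerivAt r (g t) t)
    (hg : Tendsto g atTop (nhds L))
    (hra : Tendsto r atTop (nhds a)) : L = 0 := by
  rw [← norm_le_zero_iff]
  by_contra h
  push_neg at h
  set ε := ‖L‖ / 3 with hε
  have hεpos : 0 < ε := by positivity
  have h1 : ∀ᶠ t in atTop, ‖g t - L‖ ≤ ε := by
    have h0 : Tendsto (fun t => ‖g t - L‖) atTop (nhds 0) := by
      simpa using ((hg.sub (tendsto_const_nhds (x := L))).norm)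
    exact (h0.eventually (eventually_le_nhds hεpos)).mono fun t ht => ht
  have h2 : Tendsto (fun t => r (t + 1) - r t) atTop (nhds 0) := by
    have := (hra.comp (tendsto_atTop_add_const_right atTop 1 tendsto_id)).sub hra
    simpa using this
  have h3 : ∀ᶠ t in atTop, ‖r (t + 1) - r t‖ ≤ ε := by
    have h0 : Tendsto (fun t => ‖r (t + 1) - r t‖) atTop (nhds 0) := by simpa using h2.norm
    exact (h0.eventually (eventually_le_nhds hεpos)).mono fun t ht => ht
  obtain ⟨T1, hT1⟩ := eventually_atTop.mp h1
  obtain ⟨T2, hT2⟩ := eventually_atTop.mp h3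
  set t := max (max T1 T2) 0 with htdef
  have ht0 : (0 : ℝ) ≤ t := le_max_right _ _
  have htT1 : T1 ≤ t := le_trans (le_max_left _ _) (le_max_left _ _)
  have htT2 : T2 ≤ t := le_trans (le_max_right _ _) (le_max_left _ _)
  have hφ : ∀ s ∈ Set.Icc t (t + 1),
      HasDerivWithinAt (fun s => r s - s • L) (g s - L) (Set.Icc t (t + 1)) s := by
    intro s hs
    have hs0 : (0 : ℝ) ≤ s := le_trans ht0 hs.1
    have hid : HasDerivAt (fun s : ℝ => s • L) L s := by
      simpa using (hasDerivAt_id s).smul_const L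
    exact ((hd s hs0).sub hid).hasDerivWithinAt
  have hbound : ∀ s ∈ Set.Icc t (t + 1), ‖g s - L‖ ≤ ε := fun s hs =>
    hT1 s (le_trans htT1 hs.1)
  have hmvt := (convex_Icc t (t + 1)).norm_image_sub_le_of_norm_hasDerivWithin_le
    hφ hbound (Set.left_mem_Icc.2 (by linarith)) (Set.right_mem_Icc.2 (by linarith))
  have key : ‖r (t + 1) - r t - L‖ ≤ ε := by
    have : (t + 1) • L - t • L = L := by rw [← sub_smul]; simp
    have hid : r (t + 1) - r t - L = (r (t + 1) - (t + 1) • L) - (r t - t • L) := by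
      rw [show (r (t + 1) - (t + 1) • L) - (r t - t • L)
            = r (t + 1) - r t - ((t + 1) • L - t • L) from by abel, this]
    calc ‖r (t + 1) - r t - L‖
        = ‖(r (t + 1) - (t + 1) • L) - (r t - t • L)‖ := by rw [hid]
      _ ≤ ε * ‖(t + 1) - t‖ := hmvt
      _ = ε := by simp
  have hLnorm : ‖L‖ ≤ 2 * ε := by
    have := hT2 t htT2
    calc ‖L‖ = ‖(r (t + 1) - r t) - (r (t + 1) - r t - L)‖ := by congr 1; abel
      _ ≤ ‖r (t + 1) - r t‖ + ‖r (t + 1) - r t - L‖ := norm_sub_le _ _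
      _ ≤ ε + ε := add_le_add this key
      _ = 2 * ε := by ring
  rw [hε] at hLnorm
  linarith

/-- If the normalized second-order combinatorial curvature flow `r' = λ • r - K(r)`
(with `K = ∇f` and `λ(t) = ⟪r, K(r)⟫ / ‖r‖²`) exists for all `t ≥ 0` and converges to a
nonzero point `r∞`, then the limit is a discrete quasi-Einstein metric:
`K(r∞) = λ∞ • r∞` with `λ∞ = ⟪r∞, K(r∞)⟫ / ‖r∞‖²`. -/
theorem stmt_15 {N : ℕ} (hN : 1 ≤ N)
    (f : EuclideanSpace ℝ (Fin N) → ℝ) (hf : ContDiff ℝ 1 f)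
    (K : EuclideanSpace ℝ (Fin N) → EuclideanSpace ℝ (Fin N))
    (hK : ∀ x, K x = gradient f x)
    (r : ℝ → EuclideanSpace ℝ (Fin N)) (hr0 : ∀ t : ℝ, 0 ≤ t → r t ≠ 0)
    (hflow : ∀ t : ℝ, 0 ≤ t →
      HasDerivAt r ((⟪r t, K (r t)⟫ / ‖r t‖ ^ 2) • r t - K (r t)) t)
    (rinf : EuclideanSpace ℝ (Fin N)) (hrinf : rinf ≠ 0)
    (hconv : Filter.Tendsto r Filter.atTop (nhds rinf)) :
    K rinf = (⟪rinf, K rinf⟫ / ‖rinf‖ ^ 2) • rinf := by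
  have hKeq : K = gradient f := funext hK
  have hKcont : Continuous K := by
    rw [hKeq]
    have h1 : Continuous (fderiv ℝ f) := hf.continuous_fderiv one_ne_zero
    exact ((InnerProductSpace.toDual ℝ (EuclideanSpace ℝ (Fin N))).symm.continuous).comp h1
  set V : EuclideanSpace ℝ (Fin N) → EuclideanSpace ℝ (Fin N) :=
    fun x => (⟪x, K x⟫ / ‖x‖ ^ 2) • x - K x with hV
  have hVcont : ContinuousAt V rinf := by
    have hne : (‖rinf‖ : ℝ) ^ 2 ≠ 0 := pow_ne_zero _ (norm_ne_zero_iff.2 hrinf)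
    have h1 : ContinuousAt K rinf := hKcont.continuousAt
    have h2 : ContinuousAt (fun x => ⟪x, K x⟫ / ‖x‖ ^ 2) rinf :=
      ContinuousAt.div (ContinuousAt.inner continuousAt_id h1)
        ((continuous_norm.pow 2).continuousAt) hne
    exact (h2.smul continuousAt_id).sub h1
  have hgtend : Tendsto (fun t => V (r t)) atTop (nhds (V rinf)) :=
    (hVcont.tendsto).comp hconv
  have hL0 : V rinf = 0 :=
    deriv_limit_zero r (fun t => V (r t)) (V rinf) rinf
      (fun t ht => hflow t ht) hgtend hconv
  have h := sub_eq_zero.mp hL0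
  exact h.symm
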